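/- Let G be a connected finite simple graph not isomorphic to K₂, with n vertices and m edges. Then G admits an irregularising walk of length at most 2(m + n − 1); in particular, since m ≥ n − 1, G admits an irregularising walk of length at most 4m, i.e., ML^W(G) ≤ 4m. -/

import Mathlib

open SimpleGraph Finset

variable {V : Type*}

/-- `W.inc u` is the number of edge-traversals of the walk `W` incident to `u`. -/
def SimpleGraph.Walk.inc [DecidableEq V] {G : SimpleGraph V} {a b : V}
    (W : G.Walk a b) (u : V) : ℕ :=
  (W.edges.filter (fun e => u ∈ e)).length

/-- A walk `W` of `G` is irregularising if in the multigraph `G + W` no two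
adjacent vertices have the same degree. -/
def SimpleGraph.Walk.Irregularising [Fintype V] [DecidableEq V] {G : SimpleGraph V}
    [DecidableRel G.Adj] {a b : V} (W : G.Walk a b) : Prop :=
  ∀ ⦃u v : V⦄, G.Adj u v → G.degree u + W.inc u ≠ G.degree v + W.inc v

/-- The vertex sum `σ_ℓ(u)` of a labelling. -/
def vertexSum [Fintype V] [DecidableEq V] (G : SimpleGraph V) [DecidableRel G.Adj]
    (ℓ : Sym2 V → ℕ) (u : V) : ℕ :=
  ∑ w ∈ G.neighborFinset u, ℓ s(u, w)

/-- A labelling is proper if adjacent vertices get distinct sums. -/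
def IsProperLabelling [Fintype V] [DecidableEq V] (G : SimpleGraph V) [DecidableRel G.Adj]
    (ℓ : Sym2 V → ℕ) : Prop :=
  ∀ ⦃u v : V⦄, G.Adj u v → vertexSum G ℓ u ≠ vertexSum G ℓ v

/-- Minimum length of an irregularising walk, as an extended natural number. -/
noncomputable def MLW [Fintype V] [DecidableEq V] (G : SimpleGraph V) [DecidableRel G.Adj] : ℕ∞ :=
  ⨅ (a : V) (b : V) (W : G.Walk a b) (_ : W.Irregularising), (W.length : ℕ∞)

/-- Infimum over irregularising walks of the maximum number of traversals of a single edge. -/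
noncomputable def MEW [Fintype V] [DecidableEq V] (G : SimpleGraph V) [DecidableRel G.Adj] : ℕ∞ :=
  ⨅ (a : V) (b : V) (W : G.Walk a b) (_ : W.Irregularising),
    ((W.edges.toFinset.sup fun e => W.edges.count e : ℕ) : ℕ∞)

/-- Infimum over irregularising walks of `max_u inc_W(u)`. -/
noncomputable def MVW [Fintype V] [DecidableEq V] (G : SimpleGraph V) [DecidableRel G.Adj] : ℕ∞ :=
  ⨅ (a : V) (b : V) (W : G.Walk a b) (_ : W.Irregularising),
    ((Finset.univ.sup fun u => W.inc u : ℕ) : ℕ∞)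


set_option linter.unusedSectionVars false
set_option maxHeartbeats 1000000

namespace MyIrr
variable [Fintype V] [DecidableEq V] {G : SimpleGraph V} [DecidableRel G.Adj]




lemma inc_nil {a : V} (u : V) : (SimpleGraph.Walk.nil : G.Walk a a).inc u = 0 := rfl

lemma inc_append {a b c : V} (p : G.Walk a b) (q : G.Walk b c) (u : V) :
    (p.append q).inc u = p.inc u + q.inc u := by
  simp [SimpleGraph.Walk.inc, SimpleGraph.Walk.edges_append, List.filter_append]

/-- walk bouncing `k` times on edge `x y`, starting and ending at `x`. -/
def bounce {x y : V} (h : G.Adj x y) : ℕ → G.Walk x x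
  | 0 => SimpleGraph.Walk.nil
  | k+1 => SimpleGraph.Walk.cons h (SimpleGraph.Walk.cons h.symm (bounce h k))

lemma bounce_edges {x y : V} (h : G.Adj x y) (k : ℕ) :
    (bounce h k).edges = List.replicate (2*k) s(x,y) := by
  induction k with
  | zero => rfl
  | succ k ih =>
    have hswap : s(y,x) = s(x,y) := Sym2.eq_swap
    have h2 : 2*(k+1) = (2*k+1)+1 := by ring
    rw [h2, List.replicate_succ, List.replicate_succ]
    simp only [bounce, SimpleGraph.Walk.edges_cons, ih, hswap]

lemma bounce_inc {x y : V} (h : G.Adj x y) (k : ℕ) (u : V) :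
    (bounce h k).inc u = if u = x ∨ u = y then 2*k else 0 := by
  rw [SimpleGraph.Walk.inc, bounce_edges]
  by_cases hu : u = x ∨ u = y
  · have : u ∈ s(x,y) := by rcases hu with h|h <;> simp [h, Sym2.mem_iff]
    simp [hu, List.filter_replicate, this]
  · have : u ∉ s(x,y) := by simp [Sym2.mem_iff]; push_neg at hu ⊢; exact hu
    simp [hu, List.filter_replicate, this]

lemma bounce_length {x y : V} (h : G.Adj x y) (k : ℕ) :
    (bounce h k).length = 2*k := by
  induction k with
  | zero => rfl
  | succ k ih => simp [bounce, ih]; ring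

lemma bounce_start_mem_support {x y : V} (h : G.Adj x y) (k : ℕ) :
    y ∈ (bounce h (k+1)).support := by
  simp [bounce]

lemma bounce_start_mem_support' {x y : V} (h : G.Adj x y) (k : ℕ) :
    y ∈ (bounce h (1+k)).support := by
  rw [Nat.add_comm]; exact bounce_start_mem_support h k

/-- insert the closed walk `X` (based at `u`) into the closed walk `W` at a visit of `u`. -/
def insertAt {r u : V} (W : G.Walk r r) (X : G.Walk u u) (hu : u ∈ W.support) : G.Walk r r :=
  ((W.takeUntil u hu).append X).append (W.dropUntil u hu)

lemma insertAt_inc {r u : V} (W : G.Walk r r) (X : G.Walk u u) (hu : u ∈ W.support) (w : V) :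
    (insertAt W X hu).inc w = W.inc w + X.inc w := by
  have hspec := W.take_spec hu
  have : W.inc w = (W.takeUntil u hu).inc w + (W.dropUntil u hu).inc w := by
    conv_lhs => rw [← hspec]
    rw [inc_append]
  rw [insertAt, inc_append, inc_append, this]; ring

lemma insertAt_length {r u : V} (W : G.Walk r r) (X : G.Walk u u) (hu : u ∈ W.support) :
    (insertAt W X hu).length = W.length + X.length := by
  have hspec := W.take_spec hu
  have : W.length = (W.takeUntil u hu).length + (W.dropUntil u hu).length := by
    conv_lhs => rw [← hspec]
    rw [SimpleGraph.Walk.length_append]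
  rw [insertAt, SimpleGraph.Walk.length_append, SimpleGraph.Walk.length_append, this]; ring

lemma insertAt_support {r u : V} (W : G.Walk r r) (X : G.Walk u u) (hu : u ∈ W.support) (w : V) :
    (w ∈ W.support ∨ w ∈ X.support) → w ∈ (insertAt W X hu).support := by
  intro hw
  rw [insertAt, SimpleGraph.Walk.mem_support_append_iff,
    SimpleGraph.Walk.mem_support_append_iff]
  rcases hw with hw | hw
  · rw [← W.take_spec hu, SimpleGraph.Walk.mem_support_append_iff] at hw
    tauto
  · tauto


/-- `GoodList p r L` : each element's parent is `r` or occurs later in the list. -/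
def GoodList (p : V → V) (r : V) : List V → Prop
  | [] => True
  | v :: t => (p v = r ∨ p v ∈ t) ∧ GoodList p r t

lemma GoodList.not_parent {p : V → V} {r : V} :
    ∀ {t : List V}, GoodList p r t → ∀ {v : V}, v ∉ t → v ≠ r → ∀ x ∈ t, p x ≠ v := by
  intro t
  induction t with
  | nil => intro _ v _ _ x hx; simp at hx
  | cons a t ih =>
    intro hg v hv hvr x hx
    rcases List.mem_cons.mp hx with hx | hx
    · subst hx
      rcases hg.1 with h | h
      · rw [h]; exact fun e => hvr e.symm
      · intro e; exact hv (by rw [← e]; exact List.mem_cons_of_mem _ h)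
    · exact ih hg.2 (fun h => hv (List.mem_cons_of_mem _ h)) hvr x hx

/-- specification of incidences produced by the nested-excursions walk. -/
def incSpec (p : V → V) (k : V → ℕ) (L : List V) (u : V) : ℕ :=
  (L.map fun v => (if v = u then 2*(1 + k v) else 0) + (if p v = u then 2*(1 + k v) else 0)).sum

lemma incSpec_nil (p : V → V) (k : V → ℕ) (u : V) : incSpec p k [] u = 0 := rfl

lemma incSpec_cons (p : V → V) (k : V → ℕ) (v : V) (t : List V) (u : V) :
    incSpec p k (v :: t) u =
      ((if v = u then 2*(1 + k v) else 0) + (if p v = u then 2*(1 + k v) else 0))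
        + incSpec p k t u := by
  simp [incSpec]

lemma incSpec_congr {p : V → V} {k k' : V → ℕ} {L : List V}
    (h : ∀ x ∈ L, k x = k' x) (u : V) : incSpec p k L u = incSpec p k' L u := by
  unfold incSpec
  congr 1
  exact List.map_congr_left (fun x hx => by rw [h x hx])

lemma incSpec_eq_zero {p : V → V} {k : V → ℕ} {r : V} {t : List V}
    (hg : GoodList p r t) {v : V} (hv : v ∉ t) (hvr : v ≠ r) :
    incSpec p k t v = 0 := by
  induction t with
  | nil => rfl
  | cons a t ih =>
    rw [incSpec_cons]
    have h1 : a ≠ v := fun e => hv (e ▸ (List.mem_cons_self (a := a) (l := t)))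
    have h2 : p a ≠ v := GoodList.not_parent hg hv hvr a ((List.mem_cons_self (a := a) (l := t)))
    rw [if_neg h1, if_neg h2]
    simpa using ih hg.2 (fun h => hv (List.mem_cons_of_mem _ h))

/-- Build the nested-excursion closed walk from a good list. -/
lemma exists_walk_of_list (p : V → V) (k : V → ℕ) (r : V) :
    ∀ L : List V, GoodList p r L → (∀ v ∈ L, G.Adj v (p v)) →
    ∃ W : G.Walk r r, (∀ u ∈ r :: L, u ∈ W.support) ∧
      (∀ u, W.inc u = incSpec p k L u) ∧
      W.length = (L.map fun v => 2 * (1 + k v)).sum := by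
  intro L
  induction L with
  | nil =>
    intro _ _
    exact ⟨SimpleGraph.Walk.nil, by simp, fun u => rfl, rfl⟩
  | cons v t ih =>
    intro hg hadj
    obtain ⟨W, hsup, hinc, hlen⟩ := ih hg.2 (fun x hx => hadj x (List.mem_cons_of_mem _ hx))
    have hadjv : G.Adj v (p v) := hadj v ((List.mem_cons_self (a := v) (l := t)))
    have hpv : p v ∈ W.support := by
      apply hsup
      rcases hg.1 with h | h
      · rw [h]; exact List.mem_cons_self
      · exact List.mem_cons_of_mem _ h
    set X : G.Walk (p v) (p v) := bounce hadjv.symm (1 + k v) with hX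
    refine ⟨insertAt W X hpv, ?_, ?_, ?_⟩
    · intro u hu
      rcases List.mem_cons.mp hu with hu | hu
      · exact insertAt_support _ _ _ _ (Or.inl (hsup u (by simp [hu])))
      rcases List.mem_cons.mp hu with hu | hu
      · rw [hu]
        exact insertAt_support _ _ _ _
          (Or.inr (bounce_start_mem_support' hadjv.symm (k v)))
      · exact insertAt_support _ _ _ _ (Or.inl (hsup u (List.mem_cons_of_mem _ hu)))
    · intro u
      rw [insertAt_inc, hinc, hX, bounce_inc, incSpec_cons]
      have hne : v ≠ p v := hadjv.ne
      by_cases h1 : u = v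
      · subst h1
        rw [if_pos (Or.inr rfl), if_pos rfl, if_neg (fun e => hne e.symm)]; ring
      · by_cases h2 : u = p v
        · subst h2
          rw [if_pos (Or.inl rfl), if_neg (fun e => h1 e.symm), if_pos rfl]; ring
        · rw [if_neg (by tauto), if_neg (fun e => h1 e.symm), if_neg (fun e => h2 e.symm)]
          omega
    · rw [insertAt_length, hlen, hX, bounce_length]
      simp; ring




lemma exists_avoid (S : Finset ℕ) : ∃ k : ℕ, k ≤ S.card ∧ 2 * (1 + k) ∉ S := by
  by_contra h
  push_neg at h
  have hsub : (Finset.range (S.card + 1)).image (fun k => 2 * (1 + k)) ⊆ S := by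
    intro x hx
    simp only [Finset.mem_image, Finset.mem_range] at hx
    obtain ⟨k, hk, rfl⟩ := hx
    exact h k (Nat.lt_succ_iff.mp hk)
  have hinj : Function.Injective (fun k : ℕ => 2 * (1 + k)) := by
    intro x y hxy; simp only [] at hxy; omega
  have hcard := Finset.card_le_card hsub
  rw [Finset.card_image_of_injective _ hinj, Finset.card_range] at hcard
  omega

lemma shift_not_mem {S : Finset ℕ} {D c : ℕ} (h : c ∉ S.image (fun b => b - D)) :
    D + c ∉ S := by
  intro hmem
  exact h (Finset.mem_image.mpr ⟨D + c, hmem, by omega⟩)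

lemma sum_map_add {α : Type*} (l : List α) (f g : α → ℕ) :
    (l.map fun x => f x + g x).sum = (l.map f).sum + (l.map g).sum := by
  induction l with
  | nil => rfl
  | cons a l ih => simp [ih]; omega

lemma countP_eq_sum {α : Type*} (l : List α) (q : α → Prop) [DecidablePred q] :
    (l.map fun x => if q x then 1 else 0).sum = l.countP fun x => decide (q x) := by
  induction l with
  | nil => rfl
  | cons a l ih =>
    simp only [List.map_cons, List.sum_cons, List.countP_cons, ih]
    by_cases h : q a <;> simp [h] <;> omega


/-- bound on the total number of bounces used by the greedy choice. -/
def EBound (G : SimpleGraph V) [DecidableRel G.Adj] (r : V) : List V → ℕ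
  | [] => 0
  | v :: t =>
    if t = [] then 0
    else ((r :: t).countP fun u => decide (G.Adj v u)) + (if t.length = 1 then 1 else 0)
      + EBound G r t

/-- The core greedy choice lemma. -/
lemma core (p : V → V) (r : V) :
    ∀ L : List V, L ≠ [] → L.Nodup → r ∉ L → GoodList p r L →
      (∀ v ∈ L, G.Adj v (p v)) →
      ∀ B : V → Finset ℕ, ∀ A : V → ℕ,
      (∀ a, L = [a] → G.degree a + A a ≠ G.degree r + A r) →
      ∃ k : V → ℕ,
        (∀ u ∈ r :: L, ∀ w ∈ r :: L, G.Adj u w →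
            G.degree u + A u + incSpec p k L u ≠ G.degree w + A w + incSpec p k L w) ∧
        (∀ u ∈ r :: L, G.degree u + A u + incSpec p k L u ∉ B u) ∧
        (L.map k).sum ≤ ((r :: L).map fun u => (B u).card).sum + EBound G r L := by
  intro L
  induction L with
  | nil => intro h; exact absurd rfl h
  | cons v t ih =>
    intro _ hnd hr hg hadj B A hlast
    have hvt : v ∉ t := (List.nodup_cons.mp hnd).1
    have hndt : t.Nodup := (List.nodup_cons.mp hnd).2
    have hrv : r ≠ v := fun e => hr (by rw [e]; exact List.mem_cons_self)
    have hrt : r ∉ t := fun e => hr (List.mem_cons_of_mem _ e)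
    have hadjv : G.Adj v (p v) := hadj v (List.mem_cons_self)
    have hpvv : ¬ (p v = v) := hadjv.ne'
    rcases t with _ | ⟨a, t'⟩
    · -- base case L = [v]
      have hpv : p v = r := by
        rcases hg.1 with h | h
        · exact h
        · simp at h
      obtain ⟨ka, hka, hcS⟩ := exists_avoid
        ((B v).image (fun b => b - (G.degree v + A v)) ∪
         (B r).image (fun b => b - (G.degree r + A r)))
      have hIv : incSpec p (fun _ => ka) [v] v = 2*(1+ka) := by
        rw [incSpec_cons, incSpec_nil, if_pos rfl, if_neg hpvv]; omega
      have hIr : incSpec p (fun _ => ka) [v] r = 2*(1+ka) := by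
        rw [incSpec_cons, incSpec_nil, if_neg (fun e => hrv e.symm), if_pos hpv]; omega
      refine ⟨fun _ => ka, ?_, ?_, ?_⟩
      · intro u hu w hw huw
        have hne := hlast v rfl
        rcases List.mem_cons.mp hu with hu' | hu' <;>
          rcases List.mem_cons.mp hw with hw' | hw'
        · rw [hu', hw'] at huw; exact absurd huw (G.loopless.irrefl r)
        · rw [List.mem_singleton] at hw'
          rw [hu', hw', hIv, hIr]; omega
        · rw [List.mem_singleton] at hu'
          rw [hu', hw', hIv, hIr]; omega
        · rw [List.mem_singleton] at hu' hw'
          rw [hu', hw'] at huw; exact absurd huw (G.loopless.irrefl v)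
      · intro u hu
        rcases List.mem_cons.mp hu with hu' | hu'
        · rw [hu', hIr]
          exact shift_not_mem (fun hm => hcS (Finset.mem_union_right _ hm))
        · rw [List.mem_singleton] at hu'
          rw [hu', hIv]
          exact shift_not_mem (fun hm => hcS (Finset.mem_union_left _ hm))
      · have hE : EBound G r [v] = 0 := by simp [EBound]
        have hcu := Finset.card_union_le
          ((B v).image (fun b => b - (G.degree v + A v)))
          ((B r).image (fun b => b - (G.degree r + A r)))
        have h1 := Finset.card_image_le (s := B v) (f := fun b => b - (G.degree v + A v))
        have h2 := Finset.card_image_le (s := B r) (f := fun b => b - (G.degree r + A r))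
        simp only [List.map_cons, List.map_nil, List.sum_cons, List.sum_nil, hE]
        omega
    · -- step case, L = v :: a :: t'
      have hvr : v ≠ r := fun e => hrv e.symm
      have har : a ≠ r := fun e => hrt (by rw [e]; exact List.mem_cons_self)
      set D := G.degree v + A v with hD
      set Z : Finset ℕ := (if t' = [] then
          (if p v = a then {(G.degree r + A r) - (G.degree a + A a)}
           else {(G.degree a + A a) - (G.degree r + A r)}) else ∅) with hZ
      obtain ⟨kv, hkv, hcS⟩ := exists_avoid ((B v).image (fun b => b - D) ∪ Z)
      set c := 2 * (1 + kv) with hc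
      set Fv := D + c with hFvdef
      set B' : V → Finset ℕ := fun u => if G.Adj v u then insert Fv (B u) else B u with hB'
      set A' : V → ℕ := fun u => A u + (if p v = u then c else 0) with hA'
      have hlast' : ∀ b, a :: t' = [b] → G.degree b + A' b ≠ G.degree r + A' r := by
        intro b hb
        injection hb with hab ht'
        subst hab
        subst ht'
        have hZval : Z = (if p v = a then {(G.degree r + A r) - (G.degree a + A a)}
            else {(G.degree a + A a) - (G.degree r + A r)}) := by
          rw [hZ, if_pos rfl]
        by_cases hpa : p v = a
        · intro heq
          have hAa : A' a = A a + c := by simp only [hA', if_pos hpa]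
          have hAr : A' r = A r := by
            simp only [hA', if_neg (show ¬ (p v = r) by rw [hpa]; exact har)]
            omega
          rw [hAa, hAr] at heq
          apply hcS
          refine Finset.mem_union_right _ ?_
          rw [hZval, if_pos hpa, Finset.mem_singleton]
          omega
        · have hpr : p v = r := by
            rcases hg.1 with h | h
            · exact h
            · exact absurd (List.mem_singleton.mp h) hpa
          intro heq
          have hAa : A' a = A a := by simp only [hA', if_neg hpa]; omega
          have hAr : A' r = A r + c := by simp only [hA', if_pos hpr]
          rw [hAa, hAr] at heq
          apply hcS
          refine Finset.mem_union_right _ ?_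
          rw [hZval, if_neg hpa, Finset.mem_singleton]
          omega
      obtain ⟨k₀, hi, hii, hbud⟩ := ih (List.cons_ne_nil a t') hndt hrt hg.2
        (fun x hx => hadj x (List.mem_cons_of_mem _ hx)) B' A' hlast'
      set k : V → ℕ := Function.update k₀ v kv with hk
      have hkv_eq : k v = kv := Function.update_self v kv k₀
      have hk_eq : ∀ x ∈ a :: t', k x = k₀ x := by
        intro x hx
        have hxv : x ≠ v := fun e => hvt (e ▸ hx)
        exact Function.update_of_ne hxv kv k₀
      have hspec_t : ∀ u, incSpec p k (a :: t') u = incSpec p k₀ (a :: t') u :=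
        fun u => incSpec_congr hk_eq u
      have hFv : G.degree v + A v + incSpec p k (v :: a :: t') v = Fv := by
        rw [incSpec_cons, if_pos rfl, if_neg hpvv,
          incSpec_eq_zero hg.2 hvt hvr, hkv_eq, hFvdef, hD, hc]
        omega
      have hFt : ∀ u ∈ r :: a :: t',
          G.degree u + A u + incSpec p k (v :: a :: t') u
            = G.degree u + A' u + incSpec p k₀ (a :: t') u := by
        intro u hu
        have hune : ¬ (v = u) := by
          rcases List.mem_cons.mp hu with h | h
          · rw [h]; exact hvr
          · exact fun e => hvt (e ▸ h)
        rw [incSpec_cons, if_neg hune, hspec_t u, hkv_eq, ← hc]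
        simp only [hA']
        omega
      have hsplit : ∀ u, u ∈ r :: v :: a :: t' → u = v ∨ u ∈ r :: a :: t' := by
        intro u hu
        rcases List.mem_cons.mp hu with h | h
        · right; rw [h]; exact List.mem_cons_self
        · rcases List.mem_cons.mp h with h | h
          · left; exact h
          · right; exact List.mem_cons_of_mem _ h
      refine ⟨k, ?_, ?_, ?_⟩
      · intro u hu w hw huw
        rcases hsplit u hu with hu' | hu' <;> rcases hsplit w hw with hw' | hw'
        · rw [hu', hw'] at huw; exact absurd huw (G.loopless.irrefl v)
        · rw [hu'] at huw ⊢
          rw [hFv, hFt w hw']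
          intro e
          have h2 := hii w hw'
          rw [hB'] at h2
          simp only [if_pos huw] at h2
          exact h2 (by rw [← e]; exact Finset.mem_insert_self _ _)
        · rw [hw'] at huw ⊢
          rw [hFv, hFt u hu']
          intro e
          have h2 := hii u hu'
          rw [hB'] at h2
          simp only [if_pos huw.symm] at h2
          exact h2 (by rw [e]; exact Finset.mem_insert_self _ _)
        · rw [hFt u hu', hFt w hw']
          exact hi u hu' w hw' huw
      · intro u hu
        rcases hsplit u hu with hu' | hu'
        · rw [hu', hFv, hFvdef]
          exact shift_not_mem (fun hm => hcS (Finset.mem_union_left _ hm))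
        · rw [hFt u hu']
          intro hm
          apply hii u hu'
          rw [hB']
          by_cases hadj2 : G.Adj v u
          · simp only [if_pos hadj2]; exact Finset.mem_insert_of_mem hm
          · simp only [if_neg hadj2]; exact hm
      · have hmapk : (List.map k (v :: a :: t')).sum = kv + (List.map k₀ (a :: t')).sum := by
          rw [List.map_cons, List.sum_cons, hkv_eq, List.map_congr_left hk_eq]
        have hptw : ∀ u ∈ r :: a :: t',
            (B' u).card ≤ (B u).card + (if G.Adj v u then 1 else 0) := by
          intro u _
          rw [hB']
          by_cases h : G.Adj v u
          · simp only [if_pos h]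
            exact le_trans (Finset.card_insert_le _ _) (by omega)
          · simp only [if_neg h]; omega
        have hsum1 : ((r :: a :: t').map fun u => (B' u).card).sum
            ≤ ((r :: a :: t').map fun u => (B u).card).sum
              + ((r :: a :: t').countP fun u => decide (G.Adj v u)) := by
          calc ((r :: a :: t').map fun u => (B' u).card).sum
              ≤ ((r :: a :: t').map fun u => (B u).card + (if G.Adj v u then 1 else 0)).sum :=
                List.sum_le_sum hptw
            _ = _ := by rw [sum_map_add, countP_eq_sum]
        have hZcard : Z.card ≤ (if t' = [] then 1 else 0) := by
          rw [hZ]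
          by_cases h : t' = []
          · simp only [if_pos h]
            split <;> simp
          · simp [h]
        have hkvle : kv ≤ (B v).card + (if t' = [] then 1 else 0) := by
          have h1 := Finset.card_union_le ((B v).image (fun b => b - D)) Z
          have h2 := Finset.card_image_le (s := B v) (f := fun b => b - D)
          omega
        have hlen1 : ((a :: t').length = 1) ↔ t' = [] := by
          simp [List.length_eq_zero_iff]
        have hEB : EBound G r (v :: a :: t')
            = ((r :: a :: t').countP fun u => decide (G.Adj v u))
              + (if t' = [] then 1 else 0) + EBound G r (a :: t') := by
          rw [EBound, if_neg (List.cons_ne_nil a t'), if_congr hlen1 rfl rfl]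
        rw [hmapk, hEB]
        simp only [List.map_cons, List.sum_cons] at hbud hsum1 ⊢
        omega

lemma ebound_le (p : V → V) (r : V) :
    ∀ L : List V, L.Nodup → r ∉ L → GoodList p r L → (∀ v ∈ L, G.Adj v (p v)) →
      EBound G r L ≤ (G.edgeFinset ∩ (insert r L.toFinset).sym2).card := by
  intro L
  induction L with
  | nil => intro _ _ _ _; exact Nat.zero_le _
  | cons v t ih =>
    intro hnd hr hg hadj
    rcases t with _ | ⟨a, t'⟩
    · simp [EBound]
    · set t : List V := a :: t' with ht
      have hvt : v ∉ t := (List.nodup_cons.mp hnd).1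
      have hndt : t.Nodup := (List.nodup_cons.mp hnd).2
      have hrv : r ≠ v := fun e => hr (by rw [e]; exact List.mem_cons_self)
      have hrt : r ∉ t := fun e => hr (List.mem_cons_of_mem _ e)
      set Sm : Finset V := insert r t.toFinset with hSm
      set Bg : Finset V := insert r (v :: t).toFinset with hBg
      have hvSm : v ∉ Sm := by
        rw [hSm, Finset.mem_insert]
        push_neg
        exact ⟨fun e => hrv e.symm, fun e => hvt (List.mem_toFinset.mp e)⟩
      have hSmBg : Sm ⊆ Bg := by
        rw [hSm, hBg]
        intro x hx
        rcases Finset.mem_insert.mp hx with h | h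
        · rw [h]; exact Finset.mem_insert_self _ _
        · exact Finset.mem_insert_of_mem (by
            rw [List.toFinset_cons]; exact Finset.mem_insert_of_mem h)
      have hvBg : v ∈ Bg := by
        rw [hBg]
        exact Finset.mem_insert_of_mem (by rw [List.toFinset_cons]; exact Finset.mem_insert_self _ _)
      -- the new edges at `v`
      set No : Finset V := Sm.filter (fun u => G.Adj v u) with hNo
      have himg : No.image (fun u => s(v, u)) ⊆ G.edgeFinset ∩ Bg.sym2 := by
        intro e he
        obtain ⟨u, hu, rfl⟩ := Finset.mem_image.mp he
        obtain ⟨huSm, huAdj⟩ := Finset.mem_filter.mp hu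
        refine Finset.mem_inter.mpr ⟨SimpleGraph.mem_edgeFinset.mpr huAdj, ?_⟩
        rw [Finset.mk_mem_sym2_iff]
        exact ⟨hvBg, hSmBg huSm⟩
      have hold : G.edgeFinset ∩ Sm.sym2 ⊆ G.edgeFinset ∩ Bg.sym2 := by
        intro e he
        obtain ⟨h1, h2⟩ := Finset.mem_inter.mp he
        refine Finset.mem_inter.mpr ⟨h1, ?_⟩
        rw [Finset.mem_sym2_iff] at h2 ⊢
        exact fun y hy => hSmBg (h2 y hy)
      have hdisj : Disjoint (G.edgeFinset ∩ Sm.sym2) (No.image (fun u => s(v, u))) := by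
        rw [Finset.disjoint_left]
        intro e he1 he2
        obtain ⟨u, hu, rfl⟩ := Finset.mem_image.mp he2
        obtain ⟨_, h2⟩ := Finset.mem_inter.mp he1
        rw [Finset.mem_sym2_iff] at h2
        exact hvSm (h2 v (by rw [Sym2.mem_iff]; left; rfl))
      have hsubun : (G.edgeFinset ∩ Sm.sym2) ∪ No.image (fun u => s(v, u))
          ⊆ G.edgeFinset ∩ Bg.sym2 := Finset.union_subset hold himg
      have himgcard : (No.image (fun u => s(v, u))).card = No.card := by
        apply Finset.card_image_of_injOn
        intro x _ y _ hxy
        exact Sym2.congr_right.mp hxy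
      have hcount : ((r :: t).countP fun u => decide (G.Adj v u)) = No.card := by
        have hnd2 : (r :: t).Nodup := List.nodup_cons.mpr ⟨hrt, hndt⟩
        have hNo2 : No = ((r :: t).filter (fun u => decide (G.Adj v u))).toFinset := by
          ext x
          simp only [hNo, hSm, Finset.mem_filter, Finset.mem_insert, List.mem_toFinset,
            List.mem_filter, List.mem_cons, decide_eq_true_eq]
        rw [List.countP_eq_length_filter, hNo2,
          List.toFinset_card_of_nodup (List.Nodup.filter _ hnd2)]
      have hcard : (G.edgeFinset ∩ Sm.sym2).card + No.card ≤ (G.edgeFinset ∩ Bg.sym2).card := by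
        have := Finset.card_le_card hsubun
        rwa [Finset.card_union_of_disjoint hdisj, himgcard] at this
      have hEB : EBound G r (v :: t)
          = ((r :: t).countP fun u => decide (G.Adj v u)) + (if t.length = 1 then 1 else 0)
            + EBound G r t := by
        rw [EBound, if_neg (by rw [ht]; exact List.cons_ne_nil a t')]
      rw [hEB, hcount]
      rcases eq_or_ne t' ([] : List V) with ht' | ht'
      · -- second-to-last step: bank the edge between `a` and `r`
        have haR : G.Adj a r := by
          have hga := hg.2.1
          have hada : G.Adj a (p a) :=
            hadj a (List.mem_cons_of_mem _ (by rw [ht]; exact List.mem_cons_self))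
          rcases hga with h | h
          · rw [h] at hada; exact hada
          · rw [ht'] at h; simp at h
        have hmem : s(a, r) ∈ G.edgeFinset ∩ Sm.sym2 := by
          refine Finset.mem_inter.mpr ⟨SimpleGraph.mem_edgeFinset.mpr haR, ?_⟩
          rw [Finset.mk_mem_sym2_iff]
          constructor
          · rw [hSm, ht, ht']; simp
          · rw [hSm]; exact Finset.mem_insert_self _ _
        have h1 : 1 ≤ (G.edgeFinset ∩ Sm.sym2).card := Finset.card_pos.mpr ⟨_, hmem⟩
        have hEt : EBound G r t = 0 := by rw [ht, ht']; simp [EBound]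
        have hlt : t.length = 1 := by rw [ht, ht']; rfl
        rw [hEt, hlt]
        norm_num
        omega
      · have hIH := ih hndt hrt hg.2 (fun x hx => hadj x (List.mem_cons_of_mem _ hx))
        have hlt : t.length ≠ 1 := by
          rw [ht]
          simp only [List.length_cons]
          intro hcon
          exact ht' (List.length_eq_zero_iff.mp (by omega))
        rw [if_neg hlt]
        omega


lemma MLW_le {a b : V} (W : G.Walk a b) (h : W.Irregularising) :
    MLW G ≤ (W.length : ℕ∞) :=
  iInf_le_of_le a (iInf_le_of_le b (iInf_le_of_le W (iInf_le _ h)))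

lemma sum_two_mul {α : Type*} (l : List α) (k : α → ℕ) :
    (l.map fun v => 2 * (1 + k v)).sum = 2 * l.length + 2 * (l.map k).sum := by
  induction l with
  | nil => rfl
  | cons a l ih => simp only [List.map_cons, List.sum_cons, List.length_cons, ih]; ring

lemma goodAux (p : V → V) (r : V)
    (hdist : ∀ v, v ≠ r → G.dist r (p v) + 1 = G.dist r v) :
    ∀ t : List V, (∀ x ∈ t, x ≠ r) →
      t.Pairwise (fun u w => G.dist r w ≤ G.dist r u) →
      (∀ x ∈ t, p x = r ∨ p x ∈ t) → GoodList p r t := by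
  intro t
  induction t with
  | nil => intro _ _ _; trivial
  | cons v t ih =>
    intro h1 h2 h3
    have hvr : v ≠ r := h1 v (List.mem_cons_self)
    have hdv := hdist v hvr
    constructor
    · rcases h3 v (List.mem_cons_self) with h | h
      · exact Or.inl h
      · rcases List.mem_cons.mp h with h | h
        · exfalso; rw [h] at hdv; omega
        · exact Or.inr h
    · apply ih (fun x hx => h1 x (List.mem_cons_of_mem _ hx)) (List.Pairwise.sublist (List.sublist_cons_self _ _) h2)
      intro x hx
      rcases h3 x (List.mem_cons_of_mem _ hx) with h | h
      · exact Or.inl h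
      · rcases List.mem_cons.mp h with h | h
        · exfalso
          have hxr := h1 x (List.mem_cons_of_mem _ hx)
          have hdx := hdist x hxr
          have hle : G.dist r x ≤ G.dist r v := (List.pairwise_cons.mp h2).1 x hx
          rw [h] at hdx
          omega
        · exact Or.inr h


end MyIrr

open MyIrr in
/-- Every connected graph `G` not isomorphic to `K₂`, with `n` vertices and
`m` edges, admits an irregularising walk of length at most `2(m + n - 1)`; in particular
`ML^W(G) ≤ 4m`. -/
theorem stmt_5 {V : Type*} [Fintype V] [DecidableEq V] (G : SimpleGraph V)
    [DecidableRel G.Adj] (hconn : G.Connected)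
    (hK2 : ¬ Nonempty (G ≃g (⊤ : SimpleGraph (Fin 2)))) :
    (∃ (a b : V) (W : G.Walk a b), W.Irregularising ∧
        W.length ≤ 2 * (G.edgeFinset.card + Fintype.card V - 1)) ∧
      MLW G ≤ (4 * G.edgeFinset.card : ℕ) := by
  have hne : Nonempty V := hconn.nonempty
  have hn1 : 0 < Fintype.card V := Fintype.card_pos_iff.mpr hne
  obtain ⟨r⟩ := hne
  rcases Nat.lt_or_ge (Fintype.card V) 2 with hn | hn
  · -- one vertex
    have hsub : Subsingleton V := by
      rw [← Fintype.card_le_one_iff_subsingleton]; omega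
    have hirr : (SimpleGraph.Walk.nil : G.Walk r r).Irregularising := by
      intro u v huv
      exact absurd (Subsingleton.elim u v ▸ huv) (G.loopless.irrefl v)
    refine ⟨⟨r, r, .nil, hirr, Nat.zero_le _⟩, ?_⟩
    exact le_trans (MLW_le _ hirr) (by simp)
  rcases Nat.lt_or_ge (Fintype.card V) 3 with hn2 | hn3
  · -- two vertices : excluded
    exfalso
    have h2 : (Finset.univ : Finset V).card = 2 := by
      rw [Finset.card_univ]; omega
    obtain ⟨x, y, hxy, huniv⟩ := Finset.card_eq_two.mp h2
    have hmem : ∀ z : V, z = x ∨ z = y := by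
      intro z
      have : z ∈ ({x, y} : Finset V) := by rw [← huniv]; exact Finset.mem_univ z
      simpa using this
    have hadjxy : G.Adj x y := by
      obtain ⟨w⟩ := hconn.preconnected x y
      cases w with
      | nil => exact absurd rfl hxy
      | @cons _ z _ h q =>
        rcases hmem z with hz | hz
        · exact absurd hz.symm h.ne
        · rw [← hz]; exact h
    apply hK2
    refine ⟨⟨⟨fun z => if z = x then 0 else 1, fun i => if i = 0 then x else y, ?_, ?_⟩, ?_⟩⟩
    · intro z
      rcases hmem z with hz | hz <;> subst hz
      · simp
      · simp [Ne.symm hxy]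
    · intro i
      fin_cases i
      · simp
      · simp [Ne.symm hxy]
    · intro a b
      simp only [Equiv.coe_fn_mk, SimpleGraph.top_adj]
      rcases hmem a with ha | ha <;> rcases hmem b with hb | hb <;> rw [ha, hb]
      · simp [G.loopless.irrefl x]
      · simp [Ne.symm hxy, hadjxy]
      · simp [Ne.symm hxy, hadjxy.symm]
      · simp [G.loopless.irrefl y]
  · -- main case
    have hpar : ∀ v : V, ∃ u, v ≠ r → (G.Adj v u ∧ G.dist r u + 1 = G.dist r v) := by
      intro v
      by_cases hv : v = r
      · exact ⟨v, fun h => absurd hv h⟩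
      · obtain ⟨w, hw⟩ := hconn.exists_walk_length_eq_dist v r
        cases w with
        | nil => exact absurd rfl hv
        | @cons _ z _ h q =>
          refine ⟨z, fun _ => ⟨h, ?_⟩⟩
          have hd1 : G.dist r z ≤ q.length := by
            have := SimpleGraph.dist_le q.reverse
            rwa [SimpleGraph.Walk.length_reverse] at this
          have hd2 : G.dist r v ≤ G.dist r z + 1 := by
            have htri := hconn.dist_triangle (u := r) (v := z) (w := v)
            have : G.dist z v ≤ 1 := SimpleGraph.dist_le (SimpleGraph.Walk.cons h SimpleGraph.Walk.nil).reverse |>.trans (by simp)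
            omega
          have hlen : q.length + 1 = G.dist r v := by
            rw [SimpleGraph.dist_comm]
            simpa using hw
          omega
    choose p hp using hpar
    have hpadj : ∀ v : V, v ≠ r → G.Adj v (p v) := fun v hv => (hp v hv).1
    have hpdist : ∀ v : V, v ≠ r → G.dist r (p v) + 1 = G.dist r v := fun v hv => (hp v hv).2
    set L : List V :=
      ((Finset.univ.erase r).toList).mergeSort (fun u w => decide (G.dist r w ≤ G.dist r u))
      with hL
    have hperm : L.Perm (Finset.univ.erase r).toList := List.mergeSort_perm _ _
    have hmemL : ∀ x, x ∈ L ↔ x ≠ r := by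
      intro x
      rw [hperm.mem_iff, Finset.mem_toList, Finset.mem_erase]
      simp
    have hnodup : L.Nodup := hperm.nodup_iff.mpr (Finset.nodup_toList _)
    have hrL : r ∉ L := fun h => (hmemL r).mp h rfl
    have hlenL : L.length = Fintype.card V - 1 := by
      rw [hperm.length_eq, Finset.length_toList, Finset.card_erase_of_mem (Finset.mem_univ r),
        Finset.card_univ]
    have hadjL : ∀ v ∈ L, G.Adj v (p v) := fun v hv => hpadj v ((hmemL v).mp hv)
    have hsorted : L.Pairwise (fun u w => G.dist r w ≤ G.dist r u) := by
      have hs := List.pairwise_mergeSort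
        (le := fun u w => decide (G.dist r w ≤ G.dist r u))
        (fun a b c h1 h2 => by
          simp only [decide_eq_true_eq] at *; omega)
        (fun a b => by simp only [Bool.or_eq_true, decide_eq_true_eq]; omega)
        ((Finset.univ.erase r).toList)
      rw [← hL] at hs
      exact hs.imp (fun h => by simpa using h)
    have hgood : GoodList p r L :=
      goodAux p r hpdist L (fun x hx => (hmemL x).mp hx) hsorted
        (fun x hx => by
          by_cases h : p x = r
          · exact Or.inl h
          · exact Or.inr ((hmemL (p x)).mpr h))
    have hLne : L ≠ [] := by
      intro h
      rw [h] at hlenL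
      simp at hlenL
      omega
    have hlast0 : ∀ a, L = [a] → G.degree a + (fun _ : V => 0) a ≠ G.degree r + (fun _ : V => 0) r := by
      intro a ha
      rw [ha] at hlenL
      simp at hlenL
      omega
    obtain ⟨k, hi, hii, hbud⟩ := core p r L hLne hnodup hrL hgood hadjL
      (fun _ => ∅) (fun _ => 0) hlast0
    obtain ⟨W, hWsup, hWinc, hWlen⟩ := exists_walk_of_list p k r L hgood hadjL
    have hmem_all : ∀ u : V, u ∈ r :: L := by
      intro u
      rw [List.mem_cons]
      by_cases h : u = r
      · exact Or.inl h
      · exact Or.inr ((hmemL u).mpr h)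
    have hirr : W.Irregularising := by
      intro u w huw
      have := hi u (hmem_all u) w (hmem_all w) huw
      rw [hWinc u, hWinc w]
      omega
    -- bound on edges
    have hm : Fintype.card V - 1 ≤ G.edgeFinset.card := by
      have hinj : Set.InjOn (fun v => s(v, p v)) (Finset.univ.erase r : Finset V) := by
        intro u hu w hw he
        simp only [Finset.coe_erase, Set.mem_diff, Finset.coe_univ] at hu hw
        have hur : u ≠ r := by simpa using hu
        have hwr : w ≠ r := by simpa using hw
        rcases Sym2.eq_iff.mp he with ⟨h1, _⟩ | ⟨h1, h2⟩
        · exact h1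
        · have d1 := hpdist u hur
          have d2 := hpdist w hwr
          rw [h2] at d1
          rw [← h1] at d2
          omega
      have hmaps : ∀ v ∈ (Finset.univ.erase r : Finset V), s(v, p v) ∈ G.edgeFinset := by
        intro v hv
        exact SimpleGraph.mem_edgeFinset.mpr (hpadj v (Finset.ne_of_mem_erase hv))
      have := Finset.card_le_card_of_injOn _ hmaps hinj
      rwa [Finset.card_erase_of_mem (Finset.mem_univ r), Finset.card_univ] at this
    have hbud0 : (L.map k).sum ≤ EBound G r L := by
      have hz : ((r :: L).map fun u => (∅ : Finset ℕ).card).sum = 0 := by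
        simp
      rw [hz] at hbud
      omega
    have hEb := ebound_le p r L hnodup hrL hgood hadjL
    have hEb2 : (G.edgeFinset ∩ (insert r L.toFinset).sym2).card ≤ G.edgeFinset.card :=
      Finset.card_le_card Finset.inter_subset_left
    have hlenW : W.length ≤ 2 * (G.edgeFinset.card + Fintype.card V - 1) := by
      rw [hWlen, sum_two_mul, hlenL]
      omega
    refine ⟨⟨r, r, W, hirr, hlenW⟩, ?_⟩
    refine le_trans (MLW_le W hirr) ?_
    have : W.length ≤ 4 * G.edgeFinset.card := by
      have := hlenW
      omega
    exact_mod_cast Nat.cast_le.mpr this
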